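/- For probability measures P, Q with densities p, q with respect to a σ-finite measure μ, and any probability measure S, the quantity E_S[t] where t(x) = 1_{q(x)>p(x)} - P({q>p}) satisfies: d_TV(P,Q) - d_TV(S,Q) ≤ E_S[t] ≤ d_TV(S,P), where d_TV denotes the total variation distance. -/

import Mathlib

open MeasureTheory
open scoped ENNReal

/-- Total variation distance `sup_A [P(A) - Q(A)]`. -/
noncomputable def tvDist {X : Type*} [MeasurableSpace X] (P Q : Measure X) : ℝ :=
  ⨆ A : {s : Set X // MeasurableSet s}, ((P A).toReal - (Q A).toReal)

theorem stmt0 {X : Type*} [MeasurableSpace X] (μ : Measure X) [SigmaFinite μ]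
    (p q : X → ℝ≥0∞) (hp : Measurable p) (hq : Measurable q)
    (S : Measure X)
    [IsProbabilityMeasure (μ.withDensity p)]
    [IsProbabilityMeasure (μ.withDensity q)]
    [IsProbabilityMeasure S] :
    tvDist (μ.withDensity p) (μ.withDensity q) - tvDist S (μ.withDensity q) ≤
        ∫ x, (Set.indicator {y | p y < q y} (fun _ => (1 : ℝ)) x
          - ((μ.withDensity p) {y | p y < q y}).toReal) ∂S ∧
      ∫ x, (Set.indicator {y | p y < q y} (fun _ => (1 : ℝ)) x
          - ((μ.withDensity p) {y | p y < q y}).toReal) ∂S ≤ tvDist S (μ.withDensity p) := by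
  set P := μ.withDensity p with hPdef
  set Q := μ.withDensity q with hQdef
  set B : Set X := {y | p y < q y} with hBdef
  have hB : MeasurableSet B := measurableSet_lt hp hq
  haveI : Nonempty {s : Set X // MeasurableSet s} := ⟨⟨∅, MeasurableSet.empty⟩⟩
  -- boundedness of the sup family
  have hbdd : ∀ (ν₁ ν₂ : Measure X) [IsProbabilityMeasure ν₁],
      BddAbove (Set.range fun A : {s : Set X // MeasurableSet s} =>
        ((ν₁ A).toReal - (ν₂ A).toReal)) := by
    intro ν₁ ν₂ _
    refine ⟨1, ?_⟩
    rintro x ⟨A, rfl⟩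
    have h1 : (ν₁ A).toReal ≤ 1 := by
      simpa using ENNReal.toReal_mono (by simp) (prob_le_one (μ := ν₁) (s := A))
    have h2 : 0 ≤ (ν₂ A).toReal := ENNReal.toReal_nonneg
    simp only
    linarith
  -- the integral equals S(B) - P(B)
  have hint : ∫ x, (Set.indicator B (fun _ => (1:ℝ)) x - (P B).toReal) ∂S
      = (S B).toReal - (P B).toReal := by
    rw [integral_sub ((integrable_const (1:ℝ)).indicator hB) (integrable_const _),
        integral_indicator_const _ hB, integral_const]
    simp
    rfl
  -- key ENNReal inequality
  have key : ∀ C : Set X, MeasurableSet C → Q C + P B ≤ Q B + P C := by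
    intro C hC
    have hQle : Q (C \ B) ≤ P (C \ B) := by
      rw [hQdef, hPdef, withDensity_apply _ (hC.diff hB), withDensity_apply _ (hC.diff hB)]
      refine setLIntegral_mono hp fun x hx => ?_
      exact not_lt.mp hx.2
    have hPle : P (B \ C) ≤ Q (B \ C) := by
      rw [hQdef, hPdef, withDensity_apply _ (hB.diff hC), withDensity_apply _ (hB.diff hC)]
      refine setLIntegral_mono hq fun x hx => ?_
      exact le_of_lt hx.1
    calc Q C + P B = (Q (C ∩ B) + Q (C \ B)) + (P (B ∩ C) + P (B \ C)) := by
          rw [measure_inter_add_diff C hB, measure_inter_add_diff B hC]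
      _ ≤ (Q (C ∩ B) + P (C \ B)) + (P (B ∩ C) + Q (B \ C)) := by
          exact add_le_add (add_le_add le_rfl hQle) (add_le_add le_rfl hPle)
      _ = (Q (B ∩ C) + Q (B \ C)) + (P (C ∩ B) + P (C \ B)) := by
          rw [Set.inter_comm C B, Set.inter_comm B C]; ring
      _ = Q B + P C := by rw [measure_inter_add_diff B hC, measure_inter_add_diff C hB]
  -- real version
  have keyR : ∀ C : Set X, MeasurableSet C →
      (Q C).toReal - (P C).toReal ≤ (Q B).toReal - (P B).toReal := by
    intro C hC
    rw [sub_le_sub_iff, ← ENNReal.toReal_add (measure_ne_top _ _) (measure_ne_top _ _),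
        ← ENNReal.toReal_add (measure_ne_top _ _) (measure_ne_top _ _)]
    exact (ENNReal.toReal_le_toReal (by finiteness) (by finiteness)).2 (key C hC)
  -- complement identity for probability measures
  have hcompl : ∀ (ν : Measure X) [IsProbabilityMeasure ν], ∀ A : Set X, MeasurableSet A →
      (ν A).toReal + (ν Aᶜ).toReal = 1 := by
    intro ν _ A hA
    rw [← ENNReal.toReal_add (measure_ne_top _ _) (measure_ne_top _ _),
        measure_add_measure_compl hA]
    simp
  -- upper bound for tvDist P Q
  have hup : tvDist P Q ≤ (Q B).toReal - (P B).toReal := by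
    refine ciSup_le ?_
    rintro ⟨A, hA⟩
    have h1 := hcompl P A hA
    have h2 := hcompl Q A hA
    have h3 := keyR Aᶜ hA.compl
    simp only
    linarith
  -- lower bound on tvDist S Q
  have hlo : (Q B).toReal - (S B).toReal ≤ tvDist S Q := by
    have h1 := hcompl S B hB
    have h2 := hcompl Q B hB
    have := le_ciSup (hbdd S Q) (⟨Bᶜ, hB.compl⟩ : {s : Set X // MeasurableSet s})
    simp only at this
    rw [tvDist]
    linarith
  constructor
  · rw [hint]
    have := sub_le_sub hup hlo
    linarith
  · rw [hint]
    exact le_ciSup (hbdd S P) (⟨B, hB⟩ : {s : Set X // MeasurableSet s})
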